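/- arXiv:2602.20027 — 3 statements merged into one kernel-verified Lean document; each statement's English description precedes it below -/
import Mathlib

section
/- Let X, Y, Z be varieties over ℂ, and let f : X → Y and g : X → Z be morphisms of schemes such that (1) the underlying continuous map of f is a topological quotient map, (2) the natural map 𝒪_Y → f_*𝒪_X is an isomorphism, and (3) for all closed points x, x' of X with f(x) = f(x'), one has g(x) = g(x'). Then for any two (not necessarily closed) scheme points η, η' of X with f(η) = f(η'), one has g(η) = g(η'). -/
open AlgebraicGeometry CategoryTheory

section Aux

open TopologicalSpace

/-- If `φ : A →+* C` is of finite type and its range is contained in the range of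
`ρ : B →+* C`, then `ρ` is of finite type. -/
lemma finiteType_of_range_le {A B C : Type*} [CommRing A] [CommRing B] [CommRing C]
    (φ : A →+* C) (ρ : B →+* C) (hφ : φ.FiniteType)
    (h : Set.range φ ⊆ Set.range ρ) : ρ.FiniteType := by
  letI : Algebra A C := φ.toAlgebra
  letI : Algebra B C := ρ.toAlgebra
  obtain ⟨s, hs⟩ := hφ
  refine ⟨⟨s, ?_⟩⟩
  rw [eq_top_iff]
  intro x _
  have hx : x ∈ Algebra.adjoin A (s : Set C) := hs ▸ trivial
  induction hx using Algebra.adjoin_induction with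
  | mem y hy => exact Algebra.subset_adjoin hy
  | algebraMap a =>
      obtain ⟨b, hb⟩ := h (Set.mem_range_self a)
      have hba : algebraMap A C a = algebraMap B C b := hb.symm
      rw [hba]
      exact Subalgebra.algebraMap_mem _ b
  | add _ _ _ _ h1 h2 => exact add_mem (h1 trivial) (h2 trivial)
  | mul _ _ _ _ h1 h2 => exact mul_mem (h1 trivial) (h2 trivial)

/-- Pulling back a maximal ideal along a finite type ring map with Jacobson source
yields a maximal ideal. -/
lemma isMaximal_comap_of_finiteType {A B : Type*} [CommRing A] [CommRing B] [IsJacobsonRing A]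
    (r : A →+* B) (hr : r.FiniteType) (q : Ideal B) [q.IsMaximal] : (q.comap r).IsMaximal := by
  set p := q.comap r with hp
  let rb : A ⧸ p →+* B ⧸ q := Ideal.quotientMap q r le_rfl
  have hinj : Function.Injective rb := Ideal.quotientMap_injective
  have hcomp : rb.comp (Ideal.Quotient.mk p) = (Ideal.Quotient.mk q).comp r :=
    Ideal.quotientMap_comp_mk le_rfl
  have hft : rb.FiniteType := by
    apply RingHom.FiniteType.of_comp_finiteType (f := Ideal.Quotient.mk p)
    rw [hcomp]
    exact RingHom.FiniteType.comp
      (RingHom.FiniteType.of_surjective _ Ideal.Quotient.mk_surjective) hr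
  letI : Field (B ⧸ q) := Ideal.Quotient.field q
  letI : Algebra (A ⧸ p) (B ⧸ q) := rb.toAlgebra
  haveI : Algebra.FiniteType (A ⧸ p) (B ⧸ q) := hft
  haveI : Module.Finite (A ⧸ p) (B ⧸ q) :=
    finite_of_finite_type_of_isJacobsonRing (A ⧸ p) (B ⧸ q)
  haveI : Algebra.IsIntegral (A ⧸ p) (B ⧸ q) := inferInstance
  have hfield : IsField (A ⧸ p) :=
    isField_of_isIntegral_of_isField (R := A ⧸ p) (S := B ⧸ q) hinj (Field.toIsField _)
  exact Ideal.Quotient.maximal_of_isField p hfield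

/-- Sections of a scheme locally of finite type over `Spec ℂ` on affine opens form
Jacobson rings. -/
lemma isJacobsonRing_sections {T : Scheme} (p : T ⟶ Spec (CommRingCat.of ℂ))
    [LocallyOfFiniteType p] (U : T.affineOpens) : IsJacobsonRing Γ(T, U.1) := by
  haveI : IsJacobsonRing ↑(CommRingCat.of ℂ) := inferInstanceAs (IsJacobsonRing ℂ)
  haveI : IsJacobsonRing Γ(Spec (CommRingCat.of ℂ), ⊤) := by
    let e := (Scheme.ΓSpecIso (CommRingCat.of ℂ)).symm.commRingCatIsoToRingEquiv
    exact isJacobsonRing_of_surjective ⟨e.toRingHom, e.surjective⟩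
  have hft := LocallyOfFiniteType.finiteType_appLE p
    (isAffineOpen_top _) U.2 (fun x _ => trivial)
  exact hft.isJacobsonRing

/-- A scheme locally of finite type over `Spec ℂ` is a Jacobson space. -/
lemma jacobsonSpace_of_lft {T : Scheme} (p : T ⟶ Spec (CommRingCat.of ℂ))
    [LocallyOfFiniteType p] : JacobsonSpace T := by
  rw [(show TopologicalSpace.IsOpenCover (fun i : T.affineOpens => i.1) from
    iSup_affineOpens_eq_top T).jacobsonSpace_iff]
  intro V
  haveI : IsJacobsonRing Γ(T, V.1) := isJacobsonRing_sections p V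
  haveI : JacobsonSpace ↥(Spec Γ(T, V.1)) :=
    inferInstanceAs (JacobsonSpace (PrimeSpectrum Γ(T, V.1)))
  have hoe : Topology.IsOpenEmbedding V.2.fromSpec.base := (haveI := IsAffineOpen.isOpenImmersion_fromSpec V.2; V.2.fromSpec.isOpenEmbedding)
  let e : ↥(Spec Γ(T, V.1)) ≃ₜ (V.1 : Set T) :=
    hoe.isEmbedding.toHomeomorph.trans (Homeomorph.setCongr V.2.range_fromSpec)
  exact JacobsonSpace.of_isClosedEmbedding e.symm.isClosedEmbedding

/-- A locally of finite type morphism into a Jacobson scheme (with Jacobson rings of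
sections) sends closed points to closed points. -/
lemma isClosed_image_of_lft {T X : Scheme} (φ : T ⟶ X) [LocallyOfFiniteType φ]
    [JacobsonSpace X] (hJ : ∀ U : X.affineOpens, IsJacobsonRing Γ(X, U.1))
    {w : T} (hw : IsClosed ({w} : Set T)) : IsClosed ({φ.base w} : Set X) := by
  obtain ⟨U, hU, hmemU, -⟩ := Opens.isBasis_iff_nbhd.mp X.isBasis_affineOpens
    (Opens.mem_top (φ.base w))
  obtain ⟨V, hV, hmemV, hVU⟩ := Opens.isBasis_iff_nbhd.mp T.isBasis_affineOpens
    (show w ∈ φ ⁻¹ᵁ U from hmemU)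
  have hoeV : Topology.IsOpenEmbedding hV.fromSpec.base := (haveI := IsAffineOpen.isOpenImmersion_fromSpec hV; hV.fromSpec.isOpenEmbedding)
  have hoeU : Topology.IsOpenEmbedding hU.fromSpec.base := (haveI := IsAffineOpen.isOpenImmersion_fromSpec hU; hU.fromSpec.isOpenEmbedding)
  obtain ⟨q, hq⟩ : ∃ q, hV.fromSpec.base q = w := by
    have : w ∈ Set.range hV.fromSpec.base := hV.range_fromSpec.symm ▸ hmemV
    exact this
  have hqc : IsClosed ({q} : Set (Spec Γ(T, V))) := by
    have : ({q} : Set (Spec Γ(T, V))) = hV.fromSpec.base ⁻¹' {w} := by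
      ext z
      simp only [Set.mem_singleton_iff, Set.mem_preimage]
      constructor
      · rintro rfl; exact hq
      · intro hz; exact hoeV.injective (hz.trans hq.symm)
    rw [this]
    exact hw.preimage hV.fromSpec.continuous
  haveI hqm : (q : PrimeSpectrum Γ(T, V)).asIdeal.IsMaximal :=
    (PrimeSpectrum.isClosed_singleton_iff_isMaximal _).mp hqc
  have hft := LocallyOfFiniteType.finiteType_appLE φ hU hV hVU
  haveI := hJ ⟨U, hU⟩
  have hmax : ((q : PrimeSpectrum Γ(T, V)).asIdeal.comap (φ.appLE U V hVU).hom).IsMaximal :=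
    isMaximal_comap_of_finiteType (φ.appLE U V hVU).hom hft _
  set pA : PrimeSpectrum Γ(X, U) := PrimeSpectrum.comap (φ.appLE U V hVU).hom q with hpA
  have hpc : IsClosed ({pA} : Set (PrimeSpectrum Γ(X, U))) :=
    (PrimeSpectrum.isClosed_singleton_iff_isMaximal pA).mpr hmax
  have hcomm := AlgebraicGeometry.IsAffineOpen.SpecMap_appLE_fromSpec φ hU hV hVU
  have himg : φ.base w = hU.fromSpec.base pA := by
    rw [← hq]
    have h1 : φ.base (hV.fromSpec.base q) = (hV.fromSpec ≫ φ).base q := by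
      simp
    rw [h1, ← hcomm]
    simp [hpA, Spec.map_apply]
  have hlc : IsLocallyClosed ({hU.fromSpec.base pA} : Set X) := by
    have h5 := (hpc.isLocallyClosed).image hoeU.isInducing hoeU.isOpen_range.isLocallyClosed
    exact Set.image_singleton (f := hU.fromSpec.base) (a := pA) ▸ h5
  rw [himg]
  exact isClosed_singleton_of_isLocallyClosed_singleton hlc

/-- If the structure map of `X` over `Spec ℂ` is locally of finite type and
`𝒪_Y ⟶ f_* 𝒪_X` is an isomorphism, then `f` is locally of finite type. -/
lemma locallyOfFiniteType_of_isIso_c {X Y : Scheme} (f : X ⟶ Y)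
    (sX : X ⟶ Spec (CommRingCat.of ℂ)) [LocallyOfFiniteType sX] (h2 : IsIso f.c) :
    LocallyOfFiniteType f := by
  rw [HasRingHomProperty.iff_appLE (P := @LocallyOfFiniteType)]
  intro U V e
  have eV : V.1 ≤ sX ⁻¹ᵁ ⊤ := fun x _ => trivial
  have e2 : f ⁻¹ᵁ U.1 ≤ sX ⁻¹ᵁ ⊤ := fun x _ => trivial
  have hφ : (sX.appLE ⊤ V.1 eV).hom.FiniteType :=
    LocallyOfFiniteType.finiteType_appLE sX (isAffineOpen_top _) V.2 eV
  refine finiteType_of_range_le (sX.appLE ⊤ V.1 eV).hom (f.appLE U.1 V.1 e).hom hφ ?_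
  rintro _ ⟨c, rfl⟩
  haveI : IsIso (f.c.app (Opposite.op U.1)) := inferInstance
  have hsurj : Function.Surjective (f.app U.1) :=
    (ConcreteCategory.bijective_of_isIso (f.app U.1)).2
  obtain ⟨b, hb⟩ := hsurj (sX.appLE ⊤ (f ⁻¹ᵁ U.1) e2 c)
  refine ⟨b, ?_⟩
  have h3 : sX.appLE ⊤ (f ⁻¹ᵁ U.1) e2 ≫ X.presheaf.map (homOfLE e).op
      = sX.appLE ⊤ V.1 eV := sX.appLE_map e2 ((homOfLE e).op)
  have h4 : sX.appLE ⊤ V.1 eV c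
      = X.presheaf.map (homOfLE e).op (sX.appLE ⊤ (f ⁻¹ᵁ U.1) e2 c) := by
    rw [← h3]; rfl
  show (f.app U.1 ≫ X.presheaf.map (homOfLE e).op) b = _
  rw [h4]
  show X.presheaf.map (homOfLE e).op (f.app U.1 b) = _
  rw [hb]

end Aux

/-- Claim 1 in the proof of the rigidity lemma: under the hypotheses of
the non-proper rigidity lemma, `g` is constant on the set-theoretic fibers of `f`,
i.e. if two (not necessarily closed) scheme points `η, η'` of `X` satisfy
`f(η) = f(η')`, then `g(η) = g(η')`. -/
theorem rigidity_constant_on_scheme_point_fibers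
    (X Y Z : Scheme)
    (sX : X ⟶ Spec (CommRingCat.of ℂ))
    (sY : Y ⟶ Spec (CommRingCat.of ℂ))
    (sZ : Z ⟶ Spec (CommRingCat.of ℂ))
    [IsIntegral X] [IsIntegral Y] [IsIntegral Z]
    [IsSeparated sX] [IsSeparated sY] [IsSeparated sZ]
    [LocallyOfFiniteType sX] [LocallyOfFiniteType sY] [LocallyOfFiniteType sZ]
    [QuasiCompact sX] [QuasiCompact sY] [QuasiCompact sZ]
    (f : X ⟶ Y) (g : X ⟶ Z)
    (h1 : Topology.IsQuotientMap f.base)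
    (h2 : IsIso f.c)
    (h3 : ∀ x x' : X, IsClosed ({x} : Set X) → IsClosed ({x'} : Set X) →
      f.base x = f.base x' → g.base x = g.base x') :
    ∀ η η' : X, f.base η = f.base η' → g.base η = g.base η' := by
  haveI hflft : LocallyOfFiniteType f := locallyOfFiniteType_of_isIso_c f sX h2
  haveI hfst : LocallyOfFiniteType (Limits.pullback.fst f f) :=
    inferInstance
  haveI hsnd : LocallyOfFiniteType (Limits.pullback.snd f f) :=
    inferInstance
  haveI : LocallyOfFiniteType (Limits.pullback.fst f f ≫ sX) := inferInstance
  haveI hJX : JacobsonSpace X := jacobsonSpace_of_lft sX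
  haveI hJW : JacobsonSpace ↥(Limits.pullback f f) :=
    jacobsonSpace_of_lft (Limits.pullback.fst f f ≫ sX)
  have hJXring : ∀ U : X.affineOpens, IsJacobsonRing Γ(X, U.1) :=
    fun U => isJacobsonRing_sections sX U
  have aux : ∀ η η' : X, f.base η = f.base η' →
      g.base η ∈ closure ({g.base η'} : Set Z) := by
    intro η η' hee
    obtain ⟨w₀, hw₁, hw₂⟩ := Scheme.Pullback.exists_preimage_pullback η η' hee
    set K := closure ({g.base η'} : Set Z) with hK
    have hKc : IsClosed K := isClosed_closure
    set F : Set ↥(Limits.pullback f f) :=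
      (fun w => g.base ((Limits.pullback.fst f f).base w)) ⁻¹' K with hF
    have hFc : IsClosed F :=
      hKc.preimage (g.continuous.comp (Limits.pullback.fst f f).continuous)
    have hsub : closure ({w₀} : Set ↥(Limits.pullback f f)) ∩ closedPoints _ ⊆ F := by
      rintro w ⟨hwcl, hwc⟩
      have hx : IsClosed ({(Limits.pullback.fst f f).base w} : Set X) :=
        isClosed_image_of_lft _ hJXring hwc
      have hx' : IsClosed ({(Limits.pullback.snd f f).base w} : Set X) :=
        isClosed_image_of_lft _ hJXring hwc
      have hfe : f.base ((Limits.pullback.fst f f).base w)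
          = f.base ((Limits.pullback.snd f f).base w) := by
        have hcond := Limits.pullback.condition (f := f) (g := f)
        have := congrArg (fun (m : Limits.pullback f f ⟶ Y) => m.base w) hcond
        simpa using this
      have hg := h3 _ _ hx hx' hfe
      have hsp : w₀ ⤳ w := specializes_iff_mem_closure.mpr hwcl
      have hsp2 : g.base ((Limits.pullback.snd f f).base w₀)
          ⤳ g.base ((Limits.pullback.snd f f).base w) :=
        (hsp.map (Limits.pullback.snd f f).continuous).map g.continuous
      have hmem : g.base ((Limits.pullback.snd f f).base w) ∈ K := by
        rw [hK, ← hw₂]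
        exact hsp2.mem_closure
      show g.base ((Limits.pullback.fst f f).base w) ∈ K
      rw [hg]
      exact hmem
    have hcl : closure ({w₀} : Set ↥(Limits.pullback f f)) ⊆ F := by
      have h0 := closure_inter_closedPoints
        (Z := closure ({w₀} : Set ↥(Limits.pullback f f))) isClosed_closure
      rw [← h0]
      exact closure_minimal hsub hFc
    have := hcl (subset_closure rfl)
    rw [hF] at this
    simp only [Set.mem_preimage, hw₁] at this
    exact this
  intro η η' h
  have ha := aux η η' h
  have hb := aux η' η h.symm
  exact ((specializes_iff_mem_closure.mpr hb).antisymm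
    (specializes_iff_mem_closure.mpr ha)).eq
end

section
/- Let X, Y, Z be locally ringed spaces, let f : X → Y be a morphism of locally ringed spaces whose underlying continuous map is surjective and whose structure map f^♯ : 𝒪_Y → f_*𝒪_X is an isomorphism of sheaves, let g : X → Z be a morphism of locally ringed spaces, and let h : |Y| → |Z| be a continuous map such that the underlying continuous map of g equals h composed with the underlying continuous map of f. Then there exists a morphism of locally ringed spaces h̃ : Y → Z whose underlying continuous map is h and which satisfies g = h̃ ∘ f. -/
open AlgebraicGeometry CategoryTheory

lemma whiskerRight_eqToHom_aux {C D E : Type*} [Category C] [Category D] [Category E]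
    {F G : C ⥤ D} (e : F = G) (H : D ⥤ E) :
    Functor.whiskerRight (eqToHom e) H = eqToHom (by rw [e]) := by
  subst e; simp

/-- The sheaf-theoretic part of the rigidity lemma: let `X, Y, Z` be locally ringed
spaces, `f : X ⟶ Y` a morphism whose underlying map is surjective and whose structure
map `f^♯ : 𝒪_Y ⟶ f_* 𝒪_X` is an isomorphism, `g : X ⟶ Z` a morphism, and
`h : |Y| → |Z|` a continuous map with `g = h ∘ f` on underlying spaces. Then `h`
upgrades to a morphism of locally ringed spaces `h̃ : Y ⟶ Z` with `g = h̃ ∘ f`. -/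
theorem rigidity_locally_ringed_space_factorization
    (X Y Z : LocallyRingedSpace)
    (f : X ⟶ Y) (g : X ⟶ Z)
    (hsurj : Function.Surjective f.base)
    (hiso : IsIso f.c)
    (h : Y → Z) (hcont : Continuous h)
    (hcomp : ⇑g.base = h ∘ ⇑f.base) :
    ∃ ht : Y ⟶ Z, ⇑ht.base = h ∧ g = f ≫ ht := by
  -- the continuous map `h` as a morphism in `TopCat`
  let hb : Y.toTopCat ⟶ Z.toTopCat := TopCat.ofHom ⟨h, hcont⟩
  have base_eq : f.toHom.base ≫ hb = g.toHom.base := by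
    ext x
    exact (congrFun hcomp x).symm
  have peq : g.toHom.base _* X.presheaf = hb _* (f.toHom.base _* X.presheaf) := by
    rw [← base_eq]; rfl
  -- the underlying morphism of presheafed spaces
  let ht0 : Y.toPresheafedSpace ⟶ Z.toPresheafedSpace :=
    { base := hb
      c := g.toHom.c ≫ eqToHom peq ≫
        inv ((TopCat.Presheaf.pushforward CommRingCat hb).map f.c) }
  have feq : f.toHom ≫ ht0 = g.toHom := by
    refine PresheafedSpace.ext _ _ base_eq ?_
    show (ht0.c ≫ (TopCat.Presheaf.pushforward CommRingCat hb).map f.toHom.c) ≫ _ = _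
    simp only [ht0, Category.assoc, IsIso.inv_hom_id, Category.comp_id]
    rw [whiskerRight_eqToHom_aux]
    simp
    erw [Category.assoc, eqToHom_trans, eqToHom_refl, Category.comp_id]
  have hloc : ∀ y : Y, IsLocalHom (ht0.stalkMap y).hom := by
    intro y
    obtain ⟨x, rfl⟩ := hsurj y
    have hl : IsLocalHom (g.toHom.stalkMap x).hom := g.2 x
    rw [← feq] at hl
    erw [PresheafedSpace.stalkMap.comp] at hl
    exact @isLocalHom_of_comp _ _ _ _ _ _ (ht0.stalkMap (f.base x)).hom (f.toHom.stalkMap x).hom hl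
  refine ⟨⟨ht0, hloc⟩, rfl, ?_⟩
  exact LocallyRingedSpace.Hom.ext' feq.symm
end

section
/- Let e and d be natural numbers, set n = e + d, and let M be an e × n integer matrix such that the last d columns of M are zero and the e × e matrix formed by the first e columns of M has nonzero determinant. Then there exists an e × e integer matrix L whose determinant is a unit in ℤ (i.e. det L = ±1) such that every entry of the product L·M is nonnegative. -/
open Matrix Finset

lemma exists_pos_comb {m : ℕ} (B : Matrix (Fin m) (Fin m) ℤ) :
    ∃ w : Fin m → ℤ, ∀ j, (∑ i, w i * B i j) = |B.det| := by
  set s : ℤ := if 0 ≤ B.det then 1 else -1 with hs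
  refine ⟨fun i => s * ∑ k, B.adjugate k i, fun j => ?_⟩
  have key : (∑ i, (∑ k, B.adjugate k i) * B i j) = B.det := by
    calc (∑ i, (∑ k, B.adjugate k i) * B i j)
        = ∑ k, ∑ i, B.adjugate k i * B i j := by
          rw [Finset.sum_comm]; exact Finset.sum_congr rfl fun i _ => by rw [Finset.sum_mul]
      _ = ∑ k, (B.adjugate * B) k j := by
          exact Finset.sum_congr rfl fun k _ => (Matrix.mul_apply).symm
      _ = ∑ k, (B.det • (1 : Matrix (Fin m) (Fin m) ℤ)) k j := by rw [Matrix.adjugate_mul]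
      _ = B.det := by
          simp [Matrix.smul_apply, Matrix.one_apply]
  calc (∑ i, (s * ∑ k, B.adjugate k i) * B i j)
      = s * ∑ i, (∑ k, B.adjugate k i) * B i j := by
        rw [Finset.mul_sum]; exact Finset.sum_congr rfl fun i _ => by ring
    _ = s * B.det := by rw [key]
    _ = |B.det| := by
        rcases le_or_gt 0 B.det with h | h
        · rw [hs, if_pos h, one_mul, abs_of_nonneg h]
        · rw [hs, if_neg (not_le.mpr h), abs_of_neg h]; ring


lemma clear_aux {m : ℕ} :
    ∀ (N : ℕ) (A : Matrix (Fin (m+1)) (Fin (m+1)) ℤ),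
      (A 0 0).natAbs + 2 * (∑ i, if i = (0 : Fin (m+1)) then 0 else (A i 0).natAbs) ≤ N →
      ∃ U : Matrix (Fin (m+1)) (Fin (m+1)) ℤ, IsUnit U.det ∧
        ∀ i, i ≠ (0 : Fin (m+1)) → (U * A) i 0 = 0 := by
  intro N
  induction N with
  | zero =>
    intro A hA
    refine ⟨1, by simp, fun i hi => ?_⟩
    rw [Matrix.one_mul]
    have hsum : (∑ i, if i = (0 : Fin (m+1)) then 0 else (A i 0).natAbs) = 0 := by omega
    have := (Finset.sum_eq_zero_iff).mp hsum i (Finset.mem_univ i)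
    rw [if_neg hi] at this
    omega
  | succ N IH =>
    intro A hA
    by_cases hall : ∀ i, i ≠ (0 : Fin (m+1)) → A i 0 = 0
    · exact ⟨1, by simp, fun i hi => by rw [Matrix.one_mul]; exact hall i hi⟩
    push_neg at hall
    obtain ⟨i₁, hi₁, hb⟩ := hall
    have hb1 : 1 ≤ (A i₁ 0).natAbs := by omega
    by_cases ha : A 0 0 = 0
    · -- swap rows 0 and i₁
      set σ := Equiv.swap (0 : Fin (m+1)) i₁ with hσ
      set A' := A.submatrix σ id with hA'
      have hPA : σ.permMatrix ℤ * A = A' := PEquiv.toMatrix_toPEquiv_mul σ A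
      have h00 : A' 0 0 = A i₁ 0 := by
        simp [hA', hσ, Equiv.swap_apply_left]
      have h10 : A' i₁ 0 = 0 := by
        simp [hA', hσ, Equiv.swap_apply_right, ha]
      have hoth : ∀ i, i ≠ 0 → i ≠ i₁ → A' i 0 = A i 0 := fun i h1 h2 => by
        simp [hA', hσ, Equiv.swap_apply_of_ne_of_ne h1 h2]
      -- measure bound
      have hμ : (A' 0 0).natAbs + 2 * (∑ i, if i = (0 : Fin (m+1)) then 0 else (A' i 0).natAbs) ≤ N := by
        have e1 : (∑ i, if i = (0 : Fin (m+1)) then 0 else (A i 0).natAbs)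
            = (if i₁ = (0 : Fin (m+1)) then 0 else (A i₁ 0).natAbs)
              + ∑ i ∈ Finset.univ.erase i₁, (if i = (0 : Fin (m+1)) then 0 else (A i 0).natAbs) :=
          (Finset.add_sum_erase _ _ (Finset.mem_univ i₁)).symm
        have e2 : (∑ i, if i = (0 : Fin (m+1)) then 0 else (A' i 0).natAbs)
            = (if i₁ = (0 : Fin (m+1)) then 0 else (A' i₁ 0).natAbs)
              + ∑ i ∈ Finset.univ.erase i₁, (if i = (0 : Fin (m+1)) then 0 else (A' i 0).natAbs) :=
          (Finset.add_sum_erase _ _ (Finset.mem_univ i₁)).symm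
        have e3 : ∑ i ∈ Finset.univ.erase i₁, (if i = (0 : Fin (m+1)) then 0 else (A' i 0).natAbs)
            = ∑ i ∈ Finset.univ.erase i₁, (if i = (0 : Fin (m+1)) then 0 else (A i 0).natAbs) := by
          refine Finset.sum_congr rfl fun i hi => ?_
          by_cases h0 : i = 0
          · simp [h0]
          · rw [if_neg h0, if_neg h0, hoth i h0 (Finset.ne_of_mem_erase hi)]
        rw [h00, e2, e3, if_neg hi₁, h10]
        rw [e1, if_neg hi₁, ha] at hA
        simp only [Int.natAbs_zero] at hA ⊢
        omega
      obtain ⟨U', hU', hU'0⟩ := IH A' hμ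
      refine ⟨U' * σ.permMatrix ℤ, ?_, fun i hi => ?_⟩
      · rw [Matrix.det_mul, Matrix.det_permutation]
        exact hU'.mul (Equiv.Perm.sign σ).isUnit
      · rw [Matrix.mul_assoc, hPA]
        exact hU'0 i hi
    · by_cases hlt : (A i₁ 0).natAbs < (A 0 0).natAbs
      · -- reduce row 0 modulo row i₁
        set c : ℤ := -(A 0 0 / A i₁ 0) with hc
        set A' := Matrix.transvection 0 i₁ c * A with hA'
        have h00 : A' 0 0 = A 0 0 % A i₁ 0 := by
          rw [hA', Matrix.transvection_mul_apply_same, Int.emod_def, hc]; ring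
        have hoth : ∀ i, i ≠ 0 → A' i 0 = A i 0 := fun i h1 =>
          Matrix.transvection_mul_apply_of_ne _ _ i 0 h1 c A
        have hr0 : 0 ≤ A 0 0 % A i₁ 0 := Int.emod_nonneg _ hb
        have hr1 : A 0 0 % A i₁ 0 < |A i₁ 0| := Int.emod_lt_abs _ hb
        have hμ : (A' 0 0).natAbs + 2 * (∑ i, if i = (0 : Fin (m+1)) then 0 else (A' i 0).natAbs) ≤ N := by
          have e3 : (∑ i, if i = (0 : Fin (m+1)) then 0 else (A' i 0).natAbs)
              = (∑ i, if i = (0 : Fin (m+1)) then 0 else (A i 0).natAbs) := by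
            refine Finset.sum_congr rfl fun i _ => ?_
            by_cases h0 : i = 0
            · simp [h0]
            · rw [if_neg h0, if_neg h0, hoth i h0]
          rw [h00, e3]
          rw [Int.abs_eq_natAbs] at hr1
          omega
        obtain ⟨U', hU', hU'0⟩ := IH A' hμ
        refine ⟨U' * Matrix.transvection 0 i₁ c, ?_, fun i hi => ?_⟩
        · rw [Matrix.det_mul, Matrix.det_transvection_of_ne _ _ (Ne.symm hi₁), mul_one]
          exact hU'
        · rw [Matrix.mul_assoc, ← hA']
          exact hU'0 i hi
      · -- reduce row i₁ modulo row 0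
        set c : ℤ := -(A i₁ 0 / A 0 0) with hc
        set A' := Matrix.transvection i₁ 0 c * A with hA'
        have h10 : A' i₁ 0 = A i₁ 0 % A 0 0 := by
          rw [hA', Matrix.transvection_mul_apply_same, Int.emod_def, hc]; ring
        have hoth : ∀ i, i ≠ i₁ → A' i 0 = A i 0 := fun i h1 =>
          Matrix.transvection_mul_apply_of_ne _ _ i 0 h1 c A
        have hr0 : 0 ≤ A i₁ 0 % A 0 0 := Int.emod_nonneg _ ha
        have hr1 : A i₁ 0 % A 0 0 < |A 0 0| := Int.emod_lt_abs _ ha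
        have hμ : (A' 0 0).natAbs + 2 * (∑ i, if i = (0 : Fin (m+1)) then 0 else (A' i 0).natAbs) ≤ N := by
          have e1 : (∑ i, if i = (0 : Fin (m+1)) then 0 else (A i 0).natAbs)
              = (if i₁ = (0 : Fin (m+1)) then 0 else (A i₁ 0).natAbs)
                + ∑ i ∈ Finset.univ.erase i₁, (if i = (0 : Fin (m+1)) then 0 else (A i 0).natAbs) :=
            (Finset.add_sum_erase _ _ (Finset.mem_univ i₁)).symm
          have e2 : (∑ i, if i = (0 : Fin (m+1)) then 0 else (A' i 0).natAbs)
              = (if i₁ = (0 : Fin (m+1)) then 0 else (A' i₁ 0).natAbs)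
                + ∑ i ∈ Finset.univ.erase i₁, (if i = (0 : Fin (m+1)) then 0 else (A' i 0).natAbs) :=
            (Finset.add_sum_erase _ _ (Finset.mem_univ i₁)).symm
          have e3 : ∑ i ∈ Finset.univ.erase i₁, (if i = (0 : Fin (m+1)) then 0 else (A' i 0).natAbs)
              = ∑ i ∈ Finset.univ.erase i₁, (if i = (0 : Fin (m+1)) then 0 else (A i 0).natAbs) := by
            refine Finset.sum_congr rfl fun i hi => ?_
            by_cases h0 : i = 0
            · simp [h0]
            · rw [if_neg h0, if_neg h0, hoth i (Finset.ne_of_mem_erase hi)]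
          rw [e2, e3, if_neg hi₁, h10, hoth 0 (Ne.symm hi₁)]
          rw [e1, if_neg hi₁] at hA
          rw [Int.abs_eq_natAbs] at hr1
          omega
        obtain ⟨U', hU', hU'0⟩ := IH A' hμ
        refine ⟨U' * Matrix.transvection i₁ 0 c, ?_, fun i hi => ?_⟩
        · rw [Matrix.det_mul, Matrix.det_transvection_of_ne _ _ hi₁, mul_one]
          exact hU'
        · rw [Matrix.mul_assoc, ← hA']
          exact hU'0 i hi

lemma det_eq_of_first_col {m : ℕ} (A : Matrix (Fin (m+1)) (Fin (m+1)) ℤ)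
    (h : ∀ i' : Fin m, A i'.succ 0 = 0) :
    A.det = A 0 0 * (A.submatrix Fin.succ Fin.succ).det := by
  rw [Matrix.det_succ_column_zero, Fin.sum_univ_succ]
  simp [h, Fin.succAbove_zero]

/-- identity matrix with lower-right block `L`. -/
def embed {m : ℕ} (L : Matrix (Fin m) (Fin m) ℤ) : Matrix (Fin (m+1)) (Fin (m+1)) ℤ :=
  Matrix.of fun i j =>
    if hi : i = 0 then (if j = 0 then 1 else 0)
    else if hj : j = 0 then 0 else L (i.pred hi) (j.pred hj)

lemma embed_zero_zero {m : ℕ} (L : Matrix (Fin m) (Fin m) ℤ) : embed L 0 0 = 1 := by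
  simp [embed]

lemma embed_zero_succ {m : ℕ} (L : Matrix (Fin m) (Fin m) ℤ) (j : Fin m) :
    embed L 0 j.succ = 0 := by
  simp [embed, (Fin.succ_ne_zero j)]

lemma embed_succ_zero {m : ℕ} (L : Matrix (Fin m) (Fin m) ℤ) (i : Fin m) :
    embed L i.succ 0 = 0 := by
  simp [embed, (Fin.succ_ne_zero i)]

lemma embed_succ_succ {m : ℕ} (L : Matrix (Fin m) (Fin m) ℤ) (i j : Fin m) :
    embed L i.succ j.succ = L i j := by
  simp [embed, Fin.succ_ne_zero]

lemma embed_det {m : ℕ} (L : Matrix (Fin m) (Fin m) ℤ) : (embed L).det = L.det := by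
  rw [det_eq_of_first_col _ (embed_succ_zero L), embed_zero_zero, one_mul]
  have : (embed L).submatrix Fin.succ Fin.succ = L := by
    ext i j
    exact embed_succ_succ L i j
  rw [this]

/-- identity matrix with extra entries `x` in row 0. -/
def rowAug {m : ℕ} (x : Fin m → ℤ) : Matrix (Fin (m+1)) (Fin (m+1)) ℤ :=
  Matrix.of fun i j =>
    if i = 0 then (if hj : j = 0 then 1 else x (j.pred hj))
    else if i = j then 1 else 0

lemma rowAug_zero_zero {m : ℕ} (x : Fin m → ℤ) : rowAug x 0 0 = 1 := by simp [rowAug]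

lemma rowAug_zero_succ {m : ℕ} (x : Fin m → ℤ) (j : Fin m) :
    rowAug x 0 j.succ = x j := by
  simp [rowAug, Fin.succ_ne_zero]

lemma rowAug_succ {m : ℕ} (x : Fin m → ℤ) (i : Fin m) (j : Fin (m+1)) :
    rowAug x i.succ j = if i.succ = j then 1 else 0 := by
  simp [rowAug, Fin.succ_ne_zero]

lemma rowAug_det {m : ℕ} (x : Fin m → ℤ) : (rowAug x).det = 1 := by
  rw [det_eq_of_first_col _ (fun i => by
    rw [rowAug_succ]; simp [Fin.succ_ne_zero]), rowAug_zero_zero, one_mul]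
  have : (rowAug x).submatrix Fin.succ Fin.succ = 1 := by
    ext i j
    rw [Matrix.submatrix_apply, rowAug_succ, Matrix.one_apply]
    simp [Fin.succ_inj]
  rw [this, Matrix.det_one]

lemma square_nonneg : ∀ (e : ℕ) (A : Matrix (Fin e) (Fin e) ℤ), A.det ≠ 0 →
    ∃ L : Matrix (Fin e) (Fin e) ℤ, IsUnit L.det ∧ ∀ i j, 0 ≤ (L * A) i j := by
  intro e
  induction e with
  | zero => exact fun A _ => ⟨1, by simp, fun i => i.elim0⟩
  | succ m IH =>
    intro A hA
    obtain ⟨U₁, hU₁, hU₁0⟩ := clear_aux _ A le_rfl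
    set C₁ := U₁ * A with hC₁
    clear_value C₁
    have hdetC₁ : C₁.det ≠ 0 := by
      rw [hC₁, Matrix.det_mul]; exact mul_ne_zero hU₁.ne_zero hA
    have hC₁00 : C₁ 0 0 ≠ 0 := by
      intro h
      refine hdetC₁ (Matrix.det_eq_zero_of_column_eq_zero 0 fun i => ?_)
      by_cases hi : i = 0
      · rwa [hi]
      · exact hU₁0 i hi
    set s : ℤ := if 0 < C₁ 0 0 then 1 else -1 with hs
    clear_value s
    set U₂ := Matrix.diagonal (fun i : Fin (m+1) => if i = 0 then s else 1) with hU₂def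
    clear_value U₂
    have hU₂ : IsUnit U₂.det := by
      have hd : U₂.det = s := by
        rw [hU₂def, Matrix.det_diagonal, Fin.prod_univ_succ]
        simp [Fin.succ_ne_zero]
      rw [hd]
      rcases lt_or_ge 0 (C₁ 0 0) with h | h
      · rw [hs, if_pos h]; exact isUnit_one
      · rw [hs, if_neg (not_lt.mpr h)]; exact isUnit_one.neg
    set C := U₂ * C₁ with hC
    clear_value C
    have hCentry : ∀ i j, C i j = (if i = 0 then s else 1) * C₁ i j := by
      intro i j; rw [hC, hU₂def, Matrix.diagonal_mul]
    have hCi0 : ∀ i' : Fin m, C i'.succ 0 = 0 := by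
      intro i'
      rw [hCentry, if_neg (Fin.succ_ne_zero i'), one_mul]
      exact hU₁0 _ (Fin.succ_ne_zero i')
    have hC00 : 0 < C 0 0 := by
      rw [hCentry, if_pos rfl]
      rcases lt_or_ge 0 (C₁ 0 0) with h | h
      · rw [hs, if_pos h]; omega
      · rw [hs, if_neg (not_lt.mpr h)]
        have : C₁ 0 0 < 0 := lt_of_le_of_ne h hC₁00
        omega
    have hdetC : C.det ≠ 0 := by
      rw [hC, Matrix.det_mul]; exact mul_ne_zero hU₂.ne_zero hdetC₁
    set B := C.submatrix Fin.succ Fin.succ with hB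
    clear_value B
    have hdetB : B.det ≠ 0 := by
      intro h
      rw [det_eq_of_first_col C hCi0, ← hB, h, mul_zero] at hdetC
      exact hdetC rfl
    obtain ⟨L', hL', hL'pos⟩ := IH B hdetB
    set U₃ := embed L' with hU₃def
    clear_value U₃
    have hU₃ : IsUnit U₃.det := by rw [hU₃def, embed_det]; exact hL'
    set D := U₃ * C with hD
    clear_value D
    have hD0 : ∀ j, D 0 j = C 0 j := by
      intro j
      rw [hD, Matrix.mul_apply, Fin.sum_univ_succ, hU₃def, embed_zero_zero, one_mul]
      simp [embed_zero_succ]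
    have hDs0 : ∀ i' : Fin m, D i'.succ 0 = 0 := by
      intro i'
      rw [hD, Matrix.mul_apply, Fin.sum_univ_succ, hU₃def, embed_succ_zero, zero_mul, zero_add]
      refine Finset.sum_eq_zero fun k _ => ?_
      rw [hCi0, mul_zero]
    have hDss : ∀ i' j' : Fin m, D i'.succ j'.succ = (L' * B) i' j' := by
      intro i' j'
      rw [hD, Matrix.mul_apply, Fin.sum_univ_succ, hU₃def, embed_succ_zero, zero_mul, zero_add,
        Matrix.mul_apply]
      refine Finset.sum_congr rfl fun k _ => ?_
      rw [embed_succ_succ, hB, Matrix.submatrix_apply]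
    have hdetLB : (L' * B).det ≠ 0 := by
      rw [Matrix.det_mul]; exact mul_ne_zero hL'.ne_zero hdetB
    obtain ⟨w, hw⟩ := exists_pos_comb (L' * B)
    set k : ℕ := ∑ j' : Fin m, (C 0 j'.succ).natAbs with hk
    clear_value k
    set U₄ := rowAug (fun j' => (k : ℤ) * w j') with hU₄def
    clear_value U₄
    have hU₄ : IsUnit U₄.det := by rw [hU₄def, rowAug_det]; exact isUnit_one
    set E := U₄ * D with hE
    clear_value E
    have hEsucc : ∀ (i' : Fin m) (j : Fin (m+1)), E i'.succ j = D i'.succ j := by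
      intro i' j
      rw [hE, Matrix.mul_apply]
      have : ∀ x : Fin (m+1), U₄ i'.succ x * D x j = if i'.succ = x then D x j else 0 := by
        intro x
        rw [hU₄def, rowAug_succ]
        split <;> simp
      rw [Finset.sum_congr rfl fun x _ => this x, Finset.sum_ite_eq]
      simp
    have hE0 : ∀ j, E 0 j = D 0 j + (k : ℤ) * ∑ k', w k' * D k'.succ j := by
      intro j
      rw [hE, Matrix.mul_apply, Fin.sum_univ_succ, hU₄def, rowAug_zero_zero, one_mul,
        Finset.mul_sum]
      congr 1
      refine Finset.sum_congr rfl fun k' _ => ?_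
      rw [rowAug_zero_succ]; ring
    -- final matrix and proof
    refine ⟨U₄ * (U₃ * (U₂ * U₁)), ?_, ?_⟩
    · simp only [Matrix.det_mul]
      exact (hU₄.mul (hU₃.mul (hU₂.mul hU₁)))
    · have hprod : U₄ * (U₃ * (U₂ * U₁)) * A = E := by
        rw [hE, hD, hC, hC₁]
        simp only [Matrix.mul_assoc]
      rw [hprod]
      intro i j
      refine Fin.cases ?_ (fun i' => ?_) i
      · -- row 0
        refine Fin.cases ?_ (fun j' => ?_) j
        · rw [hE0 0]
          have : ∑ k', w k' * D k'.succ 0 = 0 :=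
            Finset.sum_eq_zero fun k' _ => by rw [hDs0, mul_zero]
          rw [this, mul_zero, add_zero, hD0]
          exact hC00.le
        · rw [hE0 j'.succ]
          have h1 : ∑ k', w k' * D k'.succ j'.succ = |(L' * B).det| := by
            rw [← hw j']
            exact Finset.sum_congr rfl fun k' _ => by rw [hDss]
          rw [h1, hD0]
          have h2 : (1 : ℤ) ≤ |(L' * B).det| := Int.one_le_abs (by simpa using hdetLB)
          have h3 : |C 0 j'.succ| ≤ (k : ℤ) := by
            rw [hk]
            push_cast
            exact Finset.single_le_sum (f := fun j'' => |C 0 j''.succ|)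
              (fun _ _ => abs_nonneg _) (Finset.mem_univ j')
          have h4 : (k : ℤ) ≤ (k : ℤ) * |(L' * B).det| :=
            le_mul_of_one_le_right (Int.natCast_nonneg k) h2
          have h6 : -(C 0 j'.succ) ≤ (k : ℤ) * |(L' * B).det| :=
            le_trans (le_trans (neg_le_abs _) h3) h4
          linarith
      · -- rows succ
        rw [hEsucc]
        refine Fin.cases ?_ (fun j' => ?_) j
        · rw [hDs0]
        · rw [hDss]
          exact hL'pos i' j'

/-- Matrix form of extending a linear torus action: if the last `d` columns of an
`e × (e + d)` integer matrix `M` vanish and the square matrix formed by the first `e`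
columns has nonzero determinant, then there is a matrix `L`, invertible over `ℤ`, such
that `L * M` has only nonnegative entries. -/
theorem exists_unimodular_mul_nonneg
    (e d : ℕ) (M : Matrix (Fin e) (Fin (e + d)) ℤ)
    (hzero : ∀ (i : Fin e) (j : Fin (e + d)), e ≤ (j : ℕ) → M i j = 0)
    (hdet : (M.submatrix id (Fin.castAdd d)).det ≠ 0) :
    ∃ L : Matrix (Fin e) (Fin e) ℤ, IsUnit L.det ∧
      ∀ (i : Fin e) (j : Fin (e + d)), 0 ≤ (L * M) i j := by
  obtain ⟨L, hL, hpos⟩ := square_nonneg e (M.submatrix id (Fin.castAdd d)) hdet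
  refine ⟨L, hL, fun i j => ?_⟩
  by_cases hj : (j : ℕ) < e
  · have hcast : Fin.castAdd d ⟨(j : ℕ), hj⟩ = j := by
      apply Fin.ext
      simp
    have : (L * M) i j = (L * M.submatrix id (Fin.castAdd d)) i ⟨(j : ℕ), hj⟩ := by
      rw [Matrix.mul_apply, Matrix.mul_apply]
      refine Finset.sum_congr rfl fun x _ => ?_
      rw [Matrix.submatrix_apply, id, hcast]
    rw [this]
    exact hpos i _
  · have hz : ∀ x, M x j = 0 := fun x => hzero x j (le_of_not_gt hj)
    rw [Matrix.mul_apply]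
    rw [Finset.sum_eq_zero fun x _ => by rw [hz x, mul_zero]]
end
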